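/- arXiv:1210.5526 — 3 statements merged into one kernel-verified Lean document; each statement's English description precedes it below -/
import Mathlib

section
/- The function A ↦ (det A / tr A)^{1/(n-1)} is concave on the cone of n×n positive definite Hermitian matrices. -/
open scoped ComplexOrder
open Finset Matrix

section AuxLemmas
variable {n : ℕ}

lemma amgm {ι : Type*} (s : Finset ι) (f : ι → ℝ) (hf : ∀ i ∈ s, 0 ≤ f i) :
    ∏ i ∈ s, f i ≤ ((∑ i ∈ s, f i) / s.card) ^ s.card := by
  rcases Nat.eq_zero_or_pos s.card with h0 | hpos
  · rw [Finset.card_eq_zero.mp h0]; simp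
  have hm : (s.card : ℝ) ≠ 0 := by positivity
  have hgm := Real.geom_mean_le_arith_mean_weighted s (fun _ => (s.card : ℝ)⁻¹) f
    (fun i _ => by positivity) (by simp [Finset.sum_const, hm]) hf
  have h1 : ∏ i ∈ s, f i = (∏ i ∈ s, f i ^ ((s.card : ℝ))⁻¹) ^ s.card := by
    rw [← Finset.prod_pow]
    refine Finset.prod_congr rfl fun i hi => ?_
    rw [← Real.rpow_natCast (f i ^ ((s.card : ℝ))⁻¹), ← Real.rpow_mul (hf i hi),
      inv_mul_cancel₀ hm, Real.rpow_one]
  have h2 : ∑ i ∈ s, (s.card : ℝ)⁻¹ * f i = (∑ i ∈ s, f i) / s.card := by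
    rw [← Finset.mul_sum]; ring
  rw [h1]
  calc (∏ i ∈ s, f i ^ ((s.card : ℝ))⁻¹) ^ s.card
      ≤ (∑ i ∈ s, (s.card : ℝ)⁻¹ * f i) ^ s.card := by
        apply pow_le_pow_left₀ (Finset.prod_nonneg fun i hi => Real.rpow_nonneg (hf i hi) _) hgm
    _ = _ := by rw [h2]

lemma core {n : ℕ} (hn : 2 ≤ n) (r : Fin n → ℝ) (hr : ∀ i, 0 < r i) (j k : Fin n) (T : ℝ)
    (hjT : r j ≤ T) (hTk : T ≤ r k) :
    ∏ i, r i ≤ T * (((∑ i, r i) - T) / ((n : ℝ) - 1)) ^ (n - 1) := by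
  have hcast : ((n - 1 : ℕ) : ℝ) = (n : ℝ) - 1 := by
    have : 1 ≤ n := by omega
    push_cast [this]; ring
  have hcardj : (univ.erase j).card = n - 1 := by
    rw [card_erase_of_mem (mem_univ j)]; simp
  by_cases hjk : j = k
  · subst hjk
    have hT : T = r j := le_antisymm hTk hjT
    subst hT
    have h := amgm (univ.erase j) r (fun i _ => (hr i).le)
    rw [hcardj, hcast] at h
    have hsum : ∑ i ∈ univ.erase j, r i = (∑ i, r i) - r j :=
      Finset.sum_erase_eq_sub (mem_univ j)
    rw [hsum] at h
    calc ∏ i, r i = r j * ∏ i ∈ univ.erase j, r i := (Finset.mul_prod_erase _ _ (mem_univ j)).symm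
      _ ≤ r j * (((∑ i, r i) - r j) / ((n : ℝ) - 1)) ^ (n - 1) :=
          mul_le_mul_of_nonneg_left h (hr j).le
  · have hkj : k ∈ univ.erase j := mem_erase.mpr ⟨fun h => hjk h.symm, mem_univ k⟩
    set s := univ.erase j with hs
    set f : Fin n → ℝ := fun i => if i = k then r j + r k - T else r i with hf
    have hfpos : ∀ i ∈ s, 0 ≤ f i := by
      intro i _
      simp only [hf]
      split
      · nlinarith [hr j]
      · exact (hr i).le
    have hprod_sk : ∀ (g : Fin n → ℝ), (∀ i ∈ s.erase k, g i = r i) →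
        ∏ i ∈ s.erase k, g i = ∏ i ∈ s.erase k, r i := fun g hg => Finset.prod_congr rfl hg
    have hfs_prod : ∏ i ∈ s, f i = (r j + r k - T) * ∏ i ∈ s.erase k, r i := by
      rw [← Finset.mul_prod_erase s f hkj]
      congr 1
      · simp [hf]
      · exact Finset.prod_congr rfl fun i hi => by
          simp [hf, (Finset.mem_erase.mp hi).1]
    have hfs_sum : ∑ i ∈ s, f i = (∑ i, r i) - T := by
      rw [← Finset.add_sum_erase s f hkj]
      have h1 : ∑ i ∈ s.erase k, f i = ∑ i ∈ s.erase k, r i :=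
        Finset.sum_congr rfl fun i hi => by simp [hf, (Finset.mem_erase.mp hi).1]
      have h2 : ∑ i ∈ s.erase k, r i = (∑ i ∈ s, r i) - r k := Finset.sum_erase_eq_sub hkj
      have h3 : ∑ i ∈ s, r i = (∑ i, r i) - r j := Finset.sum_erase_eq_sub (mem_univ j)
      rw [h1, h2, h3]; simp only [hf, if_pos rfl]
      ring
    have hamgm := amgm s f hfpos
    rw [hcardj, hcast, hfs_sum, hfs_prod] at hamgm
    have hP : 0 ≤ ∏ i ∈ s.erase k, r i := Finset.prod_nonneg fun i _ => (hr i).le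
    have hkey : r j * r k ≤ T * (r j + r k - T) := by nlinarith [mul_nonneg (sub_nonneg.mpr hjT) (sub_nonneg.mpr hTk)]
    have hprod_univ : ∏ i, r i = r j * (r k * ∏ i ∈ s.erase k, r i) := by
      rw [← Finset.mul_prod_erase univ r (mem_univ j), ← hs, ← Finset.mul_prod_erase s r hkj]
    calc ∏ i, r i = (r j * r k) * ∏ i ∈ s.erase k, r i := by rw [hprod_univ]; ring
      _ ≤ (T * (r j + r k - T)) * ∏ i ∈ s.erase k, r i := mul_le_mul_of_nonneg_right hkey hP
      _ = T * ((r j + r k - T) * ∏ i ∈ s.erase k, r i) := by ring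
      _ ≤ T * ((((∑ i, r i) - T) / ((n : ℝ) - 1)) ^ (n - 1)) := by
          apply mul_le_mul_of_nonneg_left hamgm
          exact le_trans (hr j).le hjT


lemma tangent {n : ℕ} (hn : 2 ≤ n) (x c : Fin n → ℝ) (hx : ∀ i, 0 < x i) (hc : ∀ i, 0 < c i) :
    ((∏ i, x i) / (∑ i, x i)) ^ ((1 : ℝ) / ((n : ℝ) - 1)) ≤
      (1 / ((n : ℝ) - 1)) * ((∏ i, c i) / (∑ i, c i)) ^ ((1 : ℝ) / ((n : ℝ) - 1))
        * ((∑ i, x i / c i) - (∑ i, x i) / (∑ i, c i)) := by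
  haveI : NeZero n := ⟨by omega⟩
  have hn1 : (0 : ℝ) < (n : ℝ) - 1 := by
    have : (2 : ℝ) ≤ (n : ℝ) := by exact_mod_cast hn
    linarith
  set p : ℝ := 1 / ((n : ℝ) - 1) with hp
  have hppos : 0 < p := by positivity
  set r : Fin n → ℝ := fun i => x i / c i with hr
  have hrpos : ∀ i, 0 < r i := fun i => div_pos (hx i) (hc i)
  have hSc : 0 < ∑ i, c i := Finset.sum_pos (fun i _ => hc i) univ_nonempty
  have hSx : 0 < ∑ i, x i := Finset.sum_pos (fun i _ => hx i) univ_nonempty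
  have hPc : 0 < ∏ i, c i := Finset.prod_pos (fun i _ => hc i)
  have hPr : 0 < ∏ i, r i := Finset.prod_pos (fun i _ => hrpos i)
  set T : ℝ := (∑ i, x i) / (∑ i, c i) with hT
  have hTpos : 0 < T := div_pos hSx hSc
  obtain ⟨j, -, hj⟩ := Finset.exists_min_image univ r univ_nonempty
  obtain ⟨k, -, hk⟩ := Finset.exists_max_image univ r univ_nonempty
  have hjT : r j ≤ T := by
    rw [hT, le_div_iff₀ hSc, Finset.mul_sum]
    refine Finset.sum_le_sum fun i _ => ?_
    calc r j * c i ≤ r i * c i := mul_le_mul_of_nonneg_right (hj i (mem_univ i)) (hc i).le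
      _ = x i := div_mul_cancel₀ _ (hc i).ne'
  have hTk : T ≤ r k := by
    rw [hT, div_le_iff₀ hSc, Finset.mul_sum]
    refine Finset.sum_le_sum fun i _ => ?_
    calc x i = r i * c i := (div_mul_cancel₀ _ (hc i).ne').symm
      _ ≤ r k * c i := mul_le_mul_of_nonneg_right (hk i (mem_univ i)) (hc i).le
  have hcore := core hn r hrpos j k T hjT hTk
  have hQ : 0 ≤ ((∑ i, r i) - T) := by
    have : r k ≤ ∑ i, r i := Finset.single_le_sum (fun i _ => (hrpos i).le) (mem_univ k)
    linarith
  have hQ' : 0 ≤ ((∑ i, r i) - T) / ((n : ℝ) - 1) := by positivity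
  -- raise core to power p
  have h1 : (∏ i, r i) ^ p ≤ T ^ p * (((∑ i, r i) - T) * p) := by
    have := Real.rpow_le_rpow hPr.le hcore hppos.le
    rw [Real.mul_rpow hTpos.le (by positivity)] at this
    refine this.trans_eq ?_
    congr 1
    rw [← Real.rpow_natCast ((((∑ i, r i) - T) / ((n : ℝ) - 1))) (n - 1),
      ← Real.rpow_mul hQ']
    have hcast : ((n - 1 : ℕ) : ℝ) = (n : ℝ) - 1 := by
      have : 1 ≤ n := by omega
      push_cast [this]; ring
    rw [hcast]
    have : ((n : ℝ) - 1) * p = 1 := by rw [hp, mul_one_div_cancel hn1.ne']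
    rw [this, Real.rpow_one]
    rw [hp, div_eq_mul_one_div]
  have hsplit : (∏ i, x i) / (∑ i, x i) = ((∏ i, c i) / (∑ i, c i)) * ((∏ i, r i) / T) := by
    have hPx : ∏ i, x i = (∏ i, c i) * ∏ i, r i := by
      rw [← Finset.prod_mul_distrib]
      exact Finset.prod_congr rfl fun i _ => (mul_div_cancel₀ _ (hc i).ne').symm
    have hSx' : ∑ i, x i = T * ∑ i, c i := (div_mul_cancel₀ _ hSc.ne').symm
    rw [hPx, hSx']
    field_simp
  rw [hsplit, Real.mul_rpow (by positivity) (by positivity),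
    Real.div_rpow hPr.le hTpos.le]
  calc ((∏ i, c i) / ∑ i, c i) ^ p * ((∏ i, r i) ^ p / T ^ p)
      ≤ ((∏ i, c i) / ∑ i, c i) ^ p * (((∑ i, r i) - T) * p) := by
        apply mul_le_mul_of_nonneg_left _ (by positivity)
        rw [div_le_iff₀ (Real.rpow_pos_of_pos hTpos p)]
        exact h1.trans_eq (by ring)
    _ = p * ((∏ i, c i) / ∑ i, c i) ^ p * ((∑ i, r i) - T) := by ring


lemma vec_concave {n : ℕ} (hn : 2 ≤ n) (d g : Fin n → ℝ) (hd : ∀ i, 0 < d i)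
    (hg : ∀ i, 0 < g i) (t : ℝ) (ht0 : 0 ≤ t) (ht1 : t ≤ 1) :
    t * ((∏ i, d i) / (∑ i, d i)) ^ ((1 : ℝ) / ((n : ℝ) - 1))
      + (1 - t) * ((∏ i, g i) / (∑ i, g i)) ^ ((1 : ℝ) / ((n : ℝ) - 1))
    ≤ ((∏ i, (t * d i + (1 - t) * g i)) / (∑ i, (t * d i + (1 - t) * g i)))
        ^ ((1 : ℝ) / ((n : ℝ) - 1)) := by
  haveI : NeZero n := ⟨by omega⟩
  have hn1 : (0 : ℝ) < (n : ℝ) - 1 := by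
    have : (2 : ℝ) ≤ (n : ℝ) := by exact_mod_cast hn
    linarith
  set c : Fin n → ℝ := fun i => t * d i + (1 - t) * g i with hcdef
  have hc : ∀ i, 0 < c i := by
    intro i
    have h1 : 0 ≤ t * (d i - min (d i) (g i)) :=
      mul_nonneg ht0 (sub_nonneg.mpr (min_le_left _ _))
    have h2 : 0 ≤ (1 - t) * (g i - min (d i) (g i)) :=
      mul_nonneg (by linarith) (sub_nonneg.mpr (min_le_right _ _))
    have hm : 0 < min (d i) (g i) := lt_min (hd i) (hg i)
    simp only [hcdef]
    nlinarith
  have hSc : 0 < ∑ i, c i := Finset.sum_pos (fun i _ => hc i) univ_nonempty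
  have hSd : 0 < ∑ i, d i := Finset.sum_pos (fun i _ => hd i) univ_nonempty
  have hSg : 0 < ∑ i, g i := Finset.sum_pos (fun i _ => hg i) univ_nonempty
  have htd := tangent hn d c hd hc
  have htg := tangent hn g c hg hc
  set p : ℝ := 1 / ((n : ℝ) - 1) with hp
  set H : ℝ := ((∏ i, c i) / (∑ i, c i)) ^ p with hH
  have hHpos : 0 < H := Real.rpow_pos_of_pos (div_pos (Finset.prod_pos fun i _ => hc i) hSc) _
  have hsum1 : t * (∑ i, d i / c i) + (1 - t) * (∑ i, g i / c i) = n := by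
    rw [Finset.mul_sum, Finset.mul_sum, ← Finset.sum_add_distrib]
    have he : ∀ i ∈ univ, t * (d i / c i) + (1 - t) * (g i / c i) = 1 := by
      intro i _
      have hci := (hc i).ne'
      field_simp
      rfl
    rw [Finset.sum_congr rfl he, Finset.sum_const, card_univ, Fintype.card_fin]
    simp
  have hsum2 : t * ((∑ i, d i) / (∑ i, c i)) + (1 - t) * ((∑ i, g i) / (∑ i, c i)) = 1 := by
    have hcsum : ∑ i, c i = t * (∑ i, d i) + (1 - t) * (∑ i, g i) := by
      simp only [hcdef, Finset.sum_add_distrib, Finset.mul_sum]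
    field_simp
    linarith [hcsum]
  have step := add_le_add (mul_le_mul_of_nonneg_left htd ht0)
    (mul_le_mul_of_nonneg_left htg (by linarith : (0:ℝ) ≤ 1 - t))
  refine step.trans_eq ?_
  have hfin : t * (p * H * ((∑ i, d i / c i) - (∑ i, d i) / (∑ i, c i)))
      + (1 - t) * (p * H * ((∑ i, g i / c i) - (∑ i, g i) / (∑ i, c i)))
      = p * H * ((n : ℝ) - 1) := by
    have : t * ((∑ i, d i / c i) - (∑ i, d i) / (∑ i, c i))
        + (1 - t) * ((∑ i, g i / c i) - (∑ i, g i) / (∑ i, c i)) = (n : ℝ) - 1 := by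
      have := hsum1; have := hsum2; ring_nf; ring_nf at hsum1 hsum2 ⊢; nlinarith [hsum1, hsum2]
    calc t * (p * H * ((∑ i, d i / c i) - (∑ i, d i) / (∑ i, c i)))
        + (1 - t) * (p * H * ((∑ i, g i / c i) - (∑ i, g i) / (∑ i, c i)))
        = p * H * (t * ((∑ i, d i / c i) - (∑ i, d i) / (∑ i, c i))
          + (1 - t) * ((∑ i, g i / c i) - (∑ i, g i) / (∑ i, c i))) := by ring
      _ = p * H * ((n : ℝ) - 1) := by rw [this]
  refine hfin.trans ?_
  have hpn : p * ((n : ℝ) - 1) = 1 := by rw [hp, one_div_mul_cancel hn1.ne']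
  calc p * H * ((n : ℝ) - 1) = H * (p * ((n : ℝ) - 1)) := by ring
    _ = H := by rw [hpn, mul_one]



lemma diag_re_pos {M : Matrix (Fin n) (Fin n) ℂ} (hM : M.PosDef) (i : Fin n) :
    0 < (M i i).re := by
  have h := hM.re_dotProduct_pos (x := Pi.single i 1) (by
    simp [Function.ne_iff])
  simpa [Matrix.mulVec_single, dotProduct, Pi.single_apply, apply_ite] using h

lemma diag_im_zero {M : Matrix (Fin n) (Fin n) ℂ} (hM : M.IsHermitian) (i : Fin n) :
    (M i i).im = 0 := by
  have h := congrArg Complex.im (hM.apply i i)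
  simp at h
  linarith

lemma smul_isHermitian {M : Matrix (Fin n) (Fin n) ℂ} (hM : M.IsHermitian) (c : ℝ) :
    ((c : ℂ) • M).IsHermitian := by
  refine Matrix.IsHermitian.ext fun i j => ?_
  rw [Matrix.smul_apply, Matrix.smul_apply, star_smul, hM.apply i j]
  congr 1
  simp [Complex.star_def, Complex.conj_ofReal]

lemma smul_posSemidef {M : Matrix (Fin n) (Fin n) ℂ} (hM : M.PosSemidef) {c : ℝ}
    (hc : 0 ≤ c) : ((c : ℂ) • M).PosSemidef := by
  refine Matrix.PosSemidef.of_dotProduct_mulVec_nonneg (smul_isHermitian hM.1 c) fun x => ?_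
  rw [Matrix.smul_mulVec, dotProduct_smul]
  have hz := hM.dotProduct_mulVec_nonneg x
  rw [Complex.nonneg_iff] at hz ⊢
  rw [smul_eq_mul]
  constructor
  · simp only [Complex.mul_re, Complex.ofReal_re, Complex.ofReal_im]
    nlinarith [hz.1, hz.2]
  · simp only [Complex.mul_im, Complex.ofReal_re, Complex.ofReal_im]
    nlinarith [hz.1, hz.2]

lemma smul_posDef {M : Matrix (Fin n) (Fin n) ℂ} (hM : M.PosDef) {c : ℝ}
    (hc : 0 < c) : ((c : ℂ) • M).PosDef := by
  refine Matrix.PosDef.of_dotProduct_mulVec_pos (smul_isHermitian hM.1 c) fun x hx => ?_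
  rw [Matrix.smul_mulVec, dotProduct_smul]
  have hz := hM.dotProduct_mulVec_pos hx
  rw [Complex.pos_iff] at hz ⊢
  rw [smul_eq_mul]
  constructor
  · simp only [Complex.mul_re, Complex.ofReal_re, Complex.ofReal_im]
    nlinarith [hz.1, hz.2]
  · simp only [Complex.mul_im, Complex.ofReal_re, Complex.ofReal_im]
    nlinarith [hz.1, hz.2]

lemma conj_unitary_posDef {M : Matrix (Fin n) (Fin n) ℂ} (hM : M.PosDef)
    {U : Matrix (Fin n) (Fin n) ℂ} (hU : U ∈ Matrix.unitaryGroup (Fin n) ℂ) :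
    (star U * M * U).PosDef := by
  have hU1 : star U * U = 1 := Matrix.mem_unitaryGroup_iff'.mp hU
  have hherm : (star U * M * U).conjTranspose = star U * M * U := by
    rw [Matrix.conjTranspose_mul, Matrix.conjTranspose_mul, hM.1.eq]
    simp [Matrix.star_eq_conjTranspose, mul_assoc]
  refine Matrix.PosDef.of_dotProduct_mulVec_pos hherm ?_
  · intro x hx
    have hkey : dotProduct (star x) ((star U * M * U) *ᵥ x)
        = dotProduct (star (U *ᵥ x)) (M *ᵥ (U *ᵥ x)) := by
      rw [← Matrix.mulVec_mulVec, ← Matrix.mulVec_mulVec]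
      rw [Matrix.star_mulVec, ← dotProduct_mulVec]
      rfl
    rw [hkey]
    refine hM.dotProduct_mulVec_pos fun h0 => hx ?_
    have : (star U) *ᵥ (U *ᵥ x) = star U *ᵥ 0 := by rw [h0]
    rwa [Matrix.mulVec_mulVec, hU1, Matrix.one_mulVec, Matrix.mulVec_zero] at this

lemma trace_eq_sum_eigen {M : Matrix (Fin n) (Fin n) ℂ} (hM : M.IsHermitian) :
    M.trace = ((∑ i, hM.eigenvalues i : ℝ) : ℂ) := by
  have h : star (hM.eigenvectorUnitary : Matrix (Fin n) (Fin n) ℂ) * M * (hM.eigenvectorUnitary : Matrix (Fin n) (Fin n) ℂ)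
      = Matrix.diagonal (RCLike.ofReal ∘ hM.eigenvalues) := by
    have h0 := hM.conjStarAlgAut_star_eigenvectorUnitary
    rw [Unitary.conjStarAlgAut_star_apply] at h0
    exact h0
  have h2 := congrArg Matrix.trace h
  rw [Matrix.trace_mul_cycle, Matrix.mem_unitaryGroup_iff.mp hM.eigenvectorUnitary.2, one_mul]
    at h2
  rw [h2, Matrix.trace_diagonal]
  push_cast
  rfl




lemma hadamard {M : Matrix (Fin n) (Fin n) ℂ} (hM : M.PosDef) (hn : 0 < n) :
    M.det.re ≤ ∏ i, (M i i).re := by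
  haveI : NeZero n := ⟨hn.ne'⟩
  set a : Fin n → ℝ := fun i => (M i i).re with ha
  have hapos : ∀ i, 0 < a i := fun i => diag_re_pos hM i
  set w : Fin n → ℝ := fun i => (Real.sqrt (a i))⁻¹ with hw
  have hwpos : ∀ i, 0 < w i := fun i => inv_pos.mpr (Real.sqrt_pos.mpr (hapos i))
  have hw2 : ∀ i, w i ^ 2 = (a i)⁻¹ := fun i => by
    rw [hw, inv_pow, Real.sq_sqrt (hapos i).le]
  set D : Matrix (Fin n) (Fin n) ℂ := Matrix.diagonal (fun i => (w i : ℂ)) with hD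
  have hDH : Dᴴ = D := by
    have hs : (star fun i => ((w i : ℂ))) = fun i => ((w i : ℂ)) :=
      funext fun i => Complex.conj_ofReal _
    rw [hD, Matrix.diagonal_conjTranspose, hs]
  have hN : (Dᴴ * M * D).PosSemidef := hM.posSemidef.conjTranspose_mul_mul_same D
  rw [hDH] at hN
  have hNH := hN.1
  have hnu : ∀ i, 0 ≤ hNH.eigenvalues i := fun i => hN.eigenvalues_nonneg i
  have hMdiag : ∀ i, M i i = ((a i : ℝ) : ℂ) := by
    intro i
    apply Complex.ext
    · simp [ha]
    · simp [diag_im_zero hM.1 i]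
  have hNdiag : ∀ i, (D * M * D) i i = 1 := by
    intro i
    rw [Matrix.mul_apply]
    have hx : w i * a i * w i = 1 := by
      have h5 : w i * a i * w i = w i ^ 2 * a i := by ring
      rw [h5, hw2 i, inv_mul_cancel₀ (hapos i).ne']
    have hterm : ∀ j, (D * M) i j * D j i = if j = i then (w i : ℂ) * M i i * w i else 0 := by
      intro j
      rw [hD, Matrix.diagonal_mul]
      by_cases hji : j = i
      · subst hji; simp [Matrix.diagonal_apply]
      · simp [Matrix.diagonal_apply, hji]
    rw [Finset.sum_congr rfl fun j _ => hterm j, Finset.sum_ite_eq' univ i _]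
    simp only [mem_univ, if_pos]
    rw [hMdiag i, ← Complex.ofReal_mul, ← Complex.ofReal_mul, hx, Complex.ofReal_one]
  have htr : ∑ i, hNH.eigenvalues i = n := by
    have h1 := trace_eq_sum_eigen hNH
    have h2 : (D * M * D).trace = ((n : ℝ) : ℂ) := by
      rw [Matrix.trace]
      rw [Finset.sum_congr rfl fun i _ => (Matrix.diag_apply (D * M * D) i).trans (hNdiag i)]
      simp
    rw [h1] at h2
    exact_mod_cast h2
  have hdet1 : (D * M * D).det = ((∏ i, w i : ℝ) : ℂ) ^ 2 * M.det := by
    rw [Matrix.det_mul, Matrix.det_mul, Matrix.det_diagonal]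
    push_cast
    ring
  have hMdetre : M.det = ((M.det.re : ℝ) : ℂ) := by
    have hd := hM.det_pos
    rw [Complex.pos_iff] at hd
    apply Complex.ext <;> simp [← hd.2]
  have hprod : (∏ i, hNH.eigenvalues i) = (D * M * D).det.re := by
    rw [hNH.det_eq_prod_eigenvalues]
    norm_cast
  have hAM := amgm univ hNH.eigenvalues (fun i _ => hnu i)
  rw [card_univ, Fintype.card_fin, htr] at hAM
  rw [div_self (by positivity : (n : ℝ) ≠ 0), one_pow] at hAM
  have h3 : (D * M * D).det.re = (∏ i, w i) ^ 2 * M.det.re := by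
    rw [hdet1, hMdetre]
    norm_cast
  have h4 : (∏ i, w i) ^ 2 = (∏ i, a i)⁻¹ := by
    rw [← Finset.prod_pow]
    rw [Finset.prod_congr rfl fun i _ => hw2 i, ← Finset.prod_inv_distrib]
  have hfin : (∏ i, a i)⁻¹ * M.det.re ≤ 1 := by
    rw [← h4, ← h3, ← hprod]; exact hAM
  have hPa : 0 < ∏ i, a i := Finset.prod_pos fun i _ => hapos i
  calc M.det.re = (∏ i, a i) * ((∏ i, a i)⁻¹ * M.det.re) := by field_simp
    _ ≤ (∏ i, a i) * 1 := mul_le_mul_of_nonneg_left hfin hPa.le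
    _ = ∏ i, a i := mul_one _


end AuxLemmas

/-- The function `A ↦ (det A / tr A)^(1/(n-1))` is concave on the cone of
`n × n` positive definite Hermitian matrices. -/
theorem det_div_trace_rpow_concave (n : ℕ) (hn : 2 ≤ n)
    (A B : Matrix (Fin n) (Fin n) ℂ) (hA : A.PosDef) (hB : B.PosDef)
    (t : ℝ) (ht0 : 0 ≤ t) (ht1 : t ≤ 1) :
    t * (A.det.re / A.trace.re) ^ ((1 : ℝ) / ((n : ℝ) - 1))
      + (1 - t) * (B.det.re / B.trace.re) ^ ((1 : ℝ) / ((n : ℝ) - 1))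
    ≤ (((t : ℂ) • A + ((1 - t : ℝ) : ℂ) • B).det.re
        / ((t : ℂ) • A + ((1 - t : ℝ) : ℂ) • B).trace.re)
        ^ ((1 : ℝ) / ((n : ℝ) - 1)) := by
  haveI : NeZero n := ⟨by omega⟩
  have hn1 : (0 : ℝ) < (n : ℝ) - 1 := by
    have : (2 : ℝ) ≤ (n : ℝ) := by exact_mod_cast hn
    linarith
  set p : ℝ := (1 : ℝ) / ((n : ℝ) - 1) with hp
  have hp0 : 0 ≤ p := by rw [hp]; positivity
  set C : Matrix (Fin n) (Fin n) ℂ := (t : ℂ) • A + ((1 - t : ℝ) : ℂ) • B with hCdef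
  have hC : C.PosDef := by
    rcases eq_or_lt_of_le ht0 with h0 | h0
    · have hCB : C = B := by
        rw [hCdef, ← h0]
        norm_num
      rw [hCB]; exact hB
    · exact (smul_posDef hA h0).add_posSemidef
        (smul_posSemidef hB.posSemidef (by linarith : (0:ℝ) ≤ 1 - t))
  have hCH := hC.1
  set U : Matrix (Fin n) (Fin n) ℂ := (hCH.eigenvectorUnitary : Matrix (Fin n) (Fin n) ℂ) with hU
  have hUmem : U ∈ Matrix.unitaryGroup (Fin n) ℂ := hCH.eigenvectorUnitary.2
  set e : Fin n → ℝ := hCH.eigenvalues with he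
  set A' : Matrix (Fin n) (Fin n) ℂ := star U * A * U with hA'def
  set B' : Matrix (Fin n) (Fin n) ℂ := star U * B * U with hB'def
  have hA' : A'.PosDef := conj_unitary_posDef hA hUmem
  have hB' : B'.PosDef := conj_unitary_posDef hB hUmem
  set d : Fin n → ℝ := fun i => (A' i i).re with hd_def
  set g : Fin n → ℝ := fun i => (B' i i).re with hg_def
  have hd : ∀ i, 0 < d i := fun i => diag_re_pos hA' i
  have hg : ∀ i, 0 < g i := fun i => diag_re_pos hB' i
  have hdiag : star U * C * U = Matrix.diagonal (RCLike.ofReal ∘ e) :=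
    by
    have h0 := hCH.conjStarAlgAut_star_eigenvectorUnitary
    rw [Unitary.conjStarAlgAut_star_apply] at h0
    exact h0
  have hexpand : star U * C * U = (t : ℂ) • A' + ((1 - t : ℝ) : ℂ) • B' := by
    rw [hCdef, hA'def, hB'def]
    simp only [Matrix.mul_add, Matrix.add_mul, Matrix.mul_smul, Matrix.smul_mul]
  have heq : ∀ i, e i = t * d i + (1 - t) * g i := by
    intro i
    have h1 := congrFun (congrFun (hexpand.symm.trans hdiag) i) i
    have h2 := congrArg Complex.re h1
    simp only [Matrix.add_apply, Matrix.smul_apply, Matrix.diagonal_apply_eq,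
      Complex.add_re, smul_eq_mul, Complex.mul_re, Complex.ofReal_re, Complex.ofReal_im,
      Function.comp_apply, RCLike.ofReal_re] at h2
    have h4 : ((e i : ℝ) : ℂ).re = e i := Complex.ofReal_re _
    rw [show ((RCLike.ofReal (e i) : ℂ)).re = e i from h4] at h2
    simp only [hd_def, hg_def]
    linarith [h2]
  have htrA : A'.trace = A.trace := by
    rw [hA'def, Matrix.trace_mul_cycle, Matrix.mem_unitaryGroup_iff.mp hUmem, one_mul]
  have htrB : B'.trace = B.trace := by
    rw [hB'def, Matrix.trace_mul_cycle, Matrix.mem_unitaryGroup_iff.mp hUmem, one_mul]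
  have hsumd : ∑ i, d i = A.trace.re := by
    rw [← htrA, Matrix.trace]
    exact (Complex.re_sum univ _).symm
  have hsumg : ∑ i, g i = B.trace.re := by
    rw [← htrB, Matrix.trace]
    exact (Complex.re_sum univ _).symm
  have hUdet : U.det * (star U).det = 1 := by
    rw [← Matrix.det_mul, Matrix.mem_unitaryGroup_iff.mp hUmem, Matrix.det_one]
  have hdetA' : A'.det = A.det := by
    rw [hA'def, Matrix.det_mul, Matrix.det_mul]
    calc (star U).det * A.det * U.det = A.det * (U.det * (star U).det) := by ring
      _ = A.det := by rw [hUdet, mul_one]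
  have hdetB' : B'.det = B.det := by
    rw [hB'def, Matrix.det_mul, Matrix.det_mul]
    calc (star U).det * B.det * U.det = B.det * (U.det * (star U).det) := by ring
      _ = B.det := by rw [hUdet, mul_one]
  have hdetAd : A.det.re ≤ ∏ i, d i := by
    rw [← hdetA']
    exact hadamard hA' (by omega)
  have hdetBg : B.det.re ≤ ∏ i, g i := by
    rw [← hdetB']
    exact hadamard hB' (by omega)
  have hdetC : C.det.re = ∏ i, e i := by
    rw [hCH.det_eq_prod_eigenvalues]
    norm_cast
  have htrC : C.trace.re = ∑ i, e i := by
    rw [trace_eq_sum_eigen hCH]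
    norm_cast
  -- positivity facts
  have hTrA : 0 < A.trace.re := hsumd ▸ Finset.sum_pos (fun i _ => hd i) univ_nonempty
  have hTrB : 0 < B.trace.re := hsumg ▸ Finset.sum_pos (fun i _ => hg i) univ_nonempty
  have hdetApos : 0 < A.det.re := by
    have := hA.det_pos
    rw [Complex.pos_iff] at this
    exact this.1
  have hdetBpos : 0 < B.det.re := by
    have := hB.det_pos
    rw [Complex.pos_iff] at this
    exact this.1
  -- monotone steps
  have hstepA : (A.det.re / A.trace.re) ^ p ≤ ((∏ i, d i) / (∑ i, d i)) ^ p := by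
    have hS : 0 < ∑ i, d i := Finset.sum_pos (fun i _ => hd i) univ_nonempty
    apply Real.rpow_le_rpow (by positivity) _ hp0
    rw [← hsumd]
    gcongr
  have hstepB : (B.det.re / B.trace.re) ^ p ≤ ((∏ i, g i) / (∑ i, g i)) ^ p := by
    have hS : 0 < ∑ i, g i := Finset.sum_pos (fun i _ => hg i) univ_nonempty
    apply Real.rpow_le_rpow (by positivity) _ hp0
    rw [← hsumg]
    gcongr
  have main := vec_concave hn d g hd hg t ht0 ht1
  have hce : ∀ i, t * d i + (1 - t) * g i = e i := fun i => (heq i).symm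
  rw [Finset.prod_congr rfl fun i _ => hce i, Finset.sum_congr rfl fun i _ => hce i] at main
  calc t * (A.det.re / A.trace.re) ^ p + (1 - t) * (B.det.re / B.trace.re) ^ p
      ≤ t * ((∏ i, d i) / (∑ i, d i)) ^ p + (1 - t) * ((∏ i, g i) / (∑ i, g i)) ^ p :=
        add_le_add (mul_le_mul_of_nonneg_left hstepA ht0)
          (mul_le_mul_of_nonneg_left hstepB (by linarith))
    _ ≤ ((∏ i, e i) / (∑ i, e i)) ^ p := main
    _ = (C.det.re / C.trace.re) ^ p := by rw [hdetC, htrC]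
end

section
/- The function A ↦ log det A − log tr A is concave on the cone of n×n positive definite Hermitian matrices. -/
open scoped ComplexOrder

namespace LogDetTraceAux

open Matrix Finset

variable {n : ℕ}

lemma diag_pos' {A : Matrix (Fin n) (Fin n) ℂ} (hA : A.PosDef) (i : Fin n) :
    0 < A i i := by
  have h := hA.dotProduct_mulVec_pos (x := Pi.single i 1) (by
    simp only [Function.ne_iff]
    exact ⟨i, by simp⟩)
  simpa [dotProduct, Pi.single_apply, apply_ite] using h

lemma trace_re_eq (A : Matrix (Fin n) (Fin n) ℂ) :
    A.trace.re = ∑ i, (A i i).re := by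
  simp [Matrix.trace, Matrix.diag, Complex.re_sum]

lemma posDef_conj {A B : Matrix (Fin n) (Fin n) ℂ} (hA : A.PosDef) (hB : IsUnit B) :
    (Bᴴ * A * B).PosDef := by
  refine Matrix.PosDef.of_dotProduct_mulVec_pos (Matrix.isHermitian_conjTranspose_mul_mul B hA.1) fun x hx => ?_
  have hBx : B *ᵥ x ≠ 0 := by
    intro h
    exact hx ((Matrix.mulVec_injective_iff_isUnit.mpr hB).eq_iff.mp (by simp [h]))
  have key : star x ⬝ᵥ (Bᴴ * A * B) *ᵥ x = star (B *ᵥ x) ⬝ᵥ A *ᵥ (B *ᵥ x) := by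
    rw [star_mulVec, ← Matrix.mulVec_mulVec, ← Matrix.mulVec_mulVec,
      dotProduct_mulVec (star x) Bᴴ]
  rw [key]
  exact hA.dotProduct_mulVec_pos hBx

lemma det_re_eq {A : Matrix (Fin n) (Fin n) ℂ} (hA : A.IsHermitian) :
    A.det.re = ∏ i, hA.eigenvalues i := by
  rw [hA.det_eq_prod_eigenvalues]; norm_cast

lemma trace_re_eq_sum_eig {A : Matrix (Fin n) (Fin n) ℂ} (hA : A.IsHermitian) :
    A.trace.re = ∑ i, hA.eigenvalues i := by
  conv_lhs => rw [hA.spectral_theorem, Unitary.conjStarAlgAut_apply]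
  rw [Matrix.trace_mul_cycle]
  rw [show star (hA.eigenvectorUnitary : Matrix (Fin n) (Fin n) ℂ) *
      (hA.eigenvectorUnitary : Matrix (Fin n) (Fin n) ℂ) = 1 from
      (Matrix.mem_unitaryGroup_iff').mp (hA.eigenvectorUnitary).2]
  rw [Matrix.one_mul]
  simp [Matrix.trace, Matrix.diag, Complex.re_sum]

lemma log_det_le_trace_sub {A : Matrix (Fin n) (Fin n) ℂ} (hA : A.PosDef) :
    Real.log A.det.re ≤ A.trace.re - n := by
  rw [det_re_eq hA.1, trace_re_eq_sum_eig hA.1,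
    Real.log_prod (fun i _ => (hA.eigenvalues_pos i).ne')]
  calc ∑ i, Real.log (hA.1.eigenvalues i) ≤ ∑ i, (hA.1.eigenvalues i - 1) :=
        Finset.sum_le_sum fun i _ => Real.log_le_sub_one_of_pos (hA.eigenvalues_pos i)
    _ = ∑ i, hA.1.eigenvalues i - n := by
        rw [Finset.sum_sub_distrib]; simp

lemma re_conj_real (r : ℝ) (z : ℂ) : ((r:ℂ) * z * (r:ℂ)).re = r^2 * z.re := by
  simp [Complex.mul_re, Complex.ofReal_re, Complex.ofReal_im]
  ring

/-- Hadamard's inequality (log form). -/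
lemma hadamard {A : Matrix (Fin n) (Fin n) ℂ} (hA : A.PosDef) :
    Real.log A.det.re ≤ ∑ i, Real.log (A i i).re := by
  set a : Fin n → ℝ := fun i => (A i i).re with ha_def
  have ha : ∀ i, 0 < a i := fun i => (Complex.lt_def.mp (diag_pos' hA i)).1
  set e : Fin n → ℝ := fun i => (Real.sqrt (a i))⁻¹ with he_def
  have he : ∀ i, 0 < e i := fun i => inv_pos.mpr (Real.sqrt_pos.mpr (ha i))
  have hesq : ∀ i, e i ^ 2 = (a i)⁻¹ := fun i => by
    rw [he_def]; rw [← Real.sq_sqrt (ha i).le]; ring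
  set E : Matrix (Fin n) (Fin n) ℂ := Matrix.diagonal (fun i => (e i : ℂ)) with hE_def
  have hEH : Eᴴ = E := by
    simp [hE_def, Matrix.diagonal_conjTranspose, Function.comp_def]
  have hEunit : IsUnit E := by
    rw [Matrix.isUnit_iff_isUnit_det, hE_def, Matrix.det_diagonal]
    exact isUnit_iff_ne_zero.mpr (Finset.prod_ne_zero_iff.mpr fun i _ => by
      exact_mod_cast (he i).ne')
  have hN : (E * A * E).PosDef := by
    have := posDef_conj hA hEunit
    rwa [hEH] at this
  have hNdiag : ∀ i, ((E * A * E) i i).re = (a i)⁻¹ * a i := by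
    intro i
    rw [hE_def]
    rw [show (Matrix.diagonal (fun i => (e i : ℂ)) * A * Matrix.diagonal (fun i => (e i : ℂ))) i i
        = (e i : ℂ) * A i i * (e i : ℂ) by
      rw [Matrix.mul_diagonal, Matrix.diagonal_mul]]
    rw [re_conj_real, hesq]
  have htr : (E * A * E).trace.re = (n : ℝ) := by
    have : (E * A * E).trace.re = ∑ i, ((E * A * E) i i).re := by
      simp [Matrix.trace, Matrix.diag, Complex.re_sum]
    rw [this]
    rw [Finset.sum_congr rfl fun i _ => hNdiag i]
    simp [fun i => inv_mul_cancel₀ (ha i).ne']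
  have hdet : (E * A * E).det.re = (∏ i, a i)⁻¹ * A.det.re := by
    rw [Matrix.det_mul, Matrix.det_mul, hE_def, Matrix.det_diagonal]
    rw [show (∏ i, (e i : ℂ)) = ((∏ i, e i : ℝ) : ℂ) by push_cast; ring]
    rw [mul_comm]
    rw [show ((∏ i, e i : ℝ) : ℂ) * (((∏ i, e i : ℝ) : ℂ) * A.det)
      = ((∏ i, e i : ℝ) : ℂ) * A.det * ((∏ i, e i : ℝ) : ℂ) by ring]
    rw [re_conj_real]
    congr 1
    rw [← Finset.prod_pow, ← Finset.prod_inv_distrib]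
    exact Finset.prod_congr rfl fun i _ => hesq i
  have key := log_det_le_trace_sub hN
  rw [htr, hdet, sub_self] at key
  have hprod : 0 < ∏ i, a i := Finset.prod_pos fun i _ => ha i
  rw [Real.log_mul (inv_ne_zero hprod.ne') (Complex.lt_def.mp hA.det_pos).1.ne',
    Real.log_inv] at key
  have := Real.log_prod (s := Finset.univ) (f := a) (fun i _ => (ha i).ne')
  linarith [key, this.symm.le, this.le]

lemma core (hn : 0 < n) (d : Fin n → ℝ) (hd : ∀ i, 0 < d i)
    {M : Matrix (Fin n) (Fin n) ℂ} (hM : M.PosDef) :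
    Real.log M.det.re - Real.log M.trace.re ≤
      ((∑ i, Real.log (d i)) - Real.log (∑ i, d i))
      + ((∑ i, (M i i).re / d i) - n) - (M.trace.re / (∑ i, d i) - 1) := by
  haveI : Nonempty (Fin n) := Fin.pos_iff_nonempty.mp hn
  set a : Fin n → ℝ := fun i => (M i i).re with ha_def
  have ha : ∀ i, 0 < a i := fun i => (Complex.lt_def.mp (diag_pos' hM i)).1
  set S : ℝ := ∑ i, d i with hS_def
  have hS : 0 < S := Finset.sum_pos (fun i _ => hd i) Finset.univ_nonempty
  have hT_eq : M.trace.re = ∑ i, a i := trace_re_eq M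
  have hT : 0 < M.trace.re := by
    rw [hT_eq]; exact Finset.sum_pos (fun i _ => ha i) Finset.univ_nonempty
  set r : ℝ := M.trace.re / S with hr_def
  have hr : 0 < r := div_pos hT hS
  set m : Fin n → ℝ := fun i => a i / d i with hm_def
  have hm : ∀ i, 0 < m i := fun i => div_pos (ha i) (hd i)
  set w : Fin n → ℝ := fun i => d i / S with hw_def
  have hw0 : ∀ i, 0 ≤ w i := fun i => (div_pos (hd i) hS).le
  have hw1 : ∀ i, w i ≤ 1 := fun i => by
    rw [hw_def]
    rw [div_le_one hS]
    exact Finset.single_le_sum (f := d) (fun j _ => (hd j).le) (Finset.mem_univ i)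
  have hw_sum : ∑ i, w i = 1 := by
    rw [hw_def, ← Finset.sum_div]
    exact div_self hS.ne'
  have hwm : ∑ i, w i * m i = r := by
    have h : ∀ i ∈ Finset.univ, w i * m i = a i / S := fun i _ => by
      rw [hw_def, hm_def, div_mul_div_comm, mul_comm (d i) (a i),
        mul_div_mul_right _ _ (hd i).ne']
    rw [Finset.sum_congr rfl h, ← Finset.sum_div, hr_def, hT_eq]
  have step1 : ∑ i, w i * Real.log (m i) ≤ Real.log r := by
    have h1 : ∀ i ∈ Finset.univ,
        w i * Real.log (m i) ≤ w i * Real.log r + (w i * m i / r - w i) := by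
      intro i _
      have hlog : Real.log (m i) - Real.log r ≤ m i / r - 1 := by
        rw [← Real.log_div (hm i).ne' hr.ne']
        exact Real.log_le_sub_one_of_pos (div_pos (hm i) hr)
      have h2 : w i * (Real.log (m i) - Real.log r) ≤ w i * (m i / r - 1) :=
        mul_le_mul_of_nonneg_left hlog (hw0 i)
      have h3 : w i * (m i / r) = w i * m i / r := (mul_div_assoc _ _ _).symm
      nlinarith [h2]
    calc ∑ i, w i * Real.log (m i)
        ≤ ∑ i, (w i * Real.log r + (w i * m i / r - w i)) := Finset.sum_le_sum h1
      _ = (∑ i, w i) * Real.log r + ((∑ i, w i * m i) / r - ∑ i, w i) := by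
          rw [Finset.sum_add_distrib, Finset.sum_sub_distrib, ← Finset.sum_mul,
            Finset.sum_div]
      _ = Real.log r := by rw [hw_sum, hwm, div_self hr.ne']; ring
  have step2 : r - 1 - Real.log r ≤ ∑ i, (m i - 1 - Real.log (m i)) := by
    have e1 : ∑ i, w i * (m i - 1 - Real.log (m i))
        = ∑ i, w i * m i - ∑ i, w i - ∑ i, w i * Real.log (m i) := by
      simp_rw [mul_sub, mul_one]
      rw [Finset.sum_sub_distrib, Finset.sum_sub_distrib]
    have e2 : ∑ i, w i * (m i - 1 - Real.log (m i)) ≤ ∑ i, (m i - 1 - Real.log (m i)) := by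
      refine Finset.sum_le_sum fun i _ => ?_
      have hg : 0 ≤ m i - 1 - Real.log (m i) := by
        linarith [Real.log_le_sub_one_of_pos (hm i)]
      exact mul_le_of_le_one_left hg (hw1 i)
    linarith [step1, e1, e2, hwm, hw_sum]
  have hsum_split : ∑ i, (m i - 1 - Real.log (m i))
      = (∑ i, m i) - n - (∑ i, Real.log (m i)) := by
    rw [Finset.sum_sub_distrib, Finset.sum_sub_distrib]
    simp
  have hlogm_sum : ∑ i, Real.log (m i) = ∑ i, Real.log (a i) - ∑ i, Real.log (d i) := by
    rw [← Finset.sum_sub_distrib]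
    exact Finset.sum_congr rfl fun i _ => Real.log_div (ha i).ne' (hd i).ne'
  have hlogT : Real.log M.trace.re = Real.log S + Real.log r := by
    rw [hr_def, Real.log_div hT.ne' hS.ne']
    ring
  have hdet := hadamard hM
  have hms : ∑ i, (M i i).re / d i = ∑ i, m i := rfl
  have hdet' : Real.log M.det.re ≤ ∑ i, Real.log (a i) := hdet
  rw [hms]
  linarith [step2, hsum_split, hlogm_sum, hlogT, hdet']

end LogDetTraceAux

open Matrix Finset LogDetTraceAux

/-- The function `A ↦ log (det A) - log (tr A)` is concave on the cone of
`n × n` positive definite Hermitian matrices. -/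
theorem log_det_sub_log_trace_concave (n : ℕ) (hn : 2 ≤ n)
    (A B : Matrix (Fin n) (Fin n) ℂ) (hA : A.PosDef) (hB : B.PosDef)
    (t : ℝ) (ht0 : 0 ≤ t) (ht1 : t ≤ 1) :
    t * (Real.log A.det.re - Real.log A.trace.re)
      + (1 - t) * (Real.log B.det.re - Real.log B.trace.re)
    ≤ Real.log ((t : ℂ) • A + ((1 - t : ℝ) : ℂ) • B).det.re
      - Real.log ((t : ℂ) • A + ((1 - t : ℝ) : ℂ) • B).trace.re := by
  have hn0 : 0 < n := by omega
  have ht1' : (0:ℝ) ≤ 1 - t := by linarith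
  set C : Matrix (Fin n) (Fin n) ℂ := (t : ℂ) • A + ((1 - t : ℝ) : ℂ) • B with hC_def
  have hC : C.PosDef := by
    rw [Matrix.posDef_iff_dotProduct_mulVec]
    constructor
    · show Cᴴ = C
      rw [hC_def, conjTranspose_add, conjTranspose_smul, conjTranspose_smul,
        hA.1.eq, hB.1.eq]
      simp [Complex.star_def, Complex.conj_ofReal]
    · intro x hx
      rw [hC_def, add_mulVec, dotProduct_add, smul_mulVec, smul_mulVec,
        dotProduct_smul, dotProduct_smul, smul_eq_mul, smul_eq_mul]
      rcases lt_or_eq_of_le ht0 with h | h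
      · refine add_pos_of_pos_of_nonneg (mul_pos ?_ (hA.dotProduct_mulVec_pos hx)) (mul_nonneg ?_ (hB.dotProduct_mulVec_pos hx).le)
        · exact_mod_cast Complex.zero_lt_real.mpr h
        · exact_mod_cast Complex.zero_le_real.mpr ht1'
      · refine add_pos_of_nonneg_of_pos (mul_nonneg ?_ (hA.dotProduct_mulVec_pos hx).le) (mul_pos ?_ (hB.dotProduct_mulVec_pos hx))
        · exact_mod_cast Complex.zero_le_real.mpr ht0
        · have : (0:ℝ) < 1 - t := by linarith
          exact_mod_cast Complex.zero_lt_real.mpr this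
  have hCtr : C.trace.re = t * A.trace.re + (1 - t) * B.trace.re := by
    rw [hC_def, trace_add, trace_smul, trace_smul, smul_eq_mul, smul_eq_mul]
    simp [Complex.add_re, Complex.re_ofReal_mul]
  set Uc : Matrix (Fin n) (Fin n) ℂ := (hC.1.eigenvectorUnitary : Matrix (Fin n) (Fin n) ℂ)
    with hU_def
  have hU1 : star Uc * Uc = 1 := Matrix.mem_unitaryGroup_iff'.mp hC.1.eigenvectorUnitary.2
  have hU2 : Uc * star Uc = 1 := Matrix.mem_unitaryGroup_iff.mp hC.1.eigenvectorUnitary.2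
  have hUunit : IsUnit Uc := ⟨⟨Uc, star Uc, hU2, hU1⟩, rfl⟩
  have hd : ∀ i, 0 < hC.1.eigenvalues i := hC.eigenvalues_pos
  set A' : Matrix (Fin n) (Fin n) ℂ := Ucᴴ * A * Uc with hA'_def
  set B' : Matrix (Fin n) (Fin n) ℂ := Ucᴴ * B * Uc with hB'_def
  have hA' : A'.PosDef := posDef_conj hA hUunit
  have hB' : B'.PosDef := posDef_conj hB hUunit
  have hU2' : Uc * Ucᴴ = 1 := by rwa [Matrix.star_eq_conjTranspose] at hU2
  have hdetA' : A'.det = A.det := by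
    rw [hA'_def, det_mul, det_mul, mul_comm, ← mul_assoc, ← det_mul, hU2', det_one, one_mul]
  have hdetB' : B'.det = B.det := by
    rw [hB'_def, det_mul, det_mul, mul_comm, ← mul_assoc, ← det_mul, hU2', det_one, one_mul]
  have htrA' : A'.trace = A.trace := by
    rw [hA'_def, Matrix.trace_mul_cycle, hU2', Matrix.one_mul]
  have htrB' : B'.trace = B.trace := by
    rw [hB'_def, Matrix.trace_mul_cycle, hU2', Matrix.one_mul]
  have hdiagsum : (t:ℂ) • A' + ((1 - t : ℝ) : ℂ) • B'
      = diagonal (RCLike.ofReal ∘ hC.1.eigenvalues) := by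
    have h1 := Matrix.IsHermitian.conjStarAlgAut_star_eigenvectorUnitary hC.1
    rw [Unitary.conjStarAlgAut_apply, Unitary.coe_star, star_star,
      Matrix.star_eq_conjTranspose, ← hU_def] at h1
    rw [hA'_def, hB'_def, ← h1, hC_def]
    rw [Matrix.mul_add, Matrix.add_mul, Matrix.mul_smul, Matrix.smul_mul,
      Matrix.mul_smul, Matrix.smul_mul]
  have hdiag : ∀ i, t * (A' i i).re + (1 - t) * (B' i i).re = hC.1.eigenvalues i := by
    intro i
    have h2 := congrArg (fun M : Matrix (Fin n) (Fin n) ℂ => (M i i).re) hdiagsum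
    simpa [Matrix.add_apply, Matrix.smul_apply, smul_eq_mul, Complex.add_re,
      Complex.re_ofReal_mul, Matrix.diagonal_apply_eq, Function.comp] using h2
  have hS : 0 < ∑ i, hC.1.eigenvalues i := by
    haveI : Nonempty (Fin n) := Fin.pos_iff_nonempty.mp hn0
    exact Finset.sum_pos (fun i _ => hd i) Finset.univ_nonempty
  have coreA := core hn0 hC.1.eigenvalues hd hA'
  have coreB := core hn0 hC.1.eigenvalues hd hB'
  rw [show A'.det.re = A.det.re from congrArg Complex.re hdetA',
    show A'.trace.re = A.trace.re from congrArg Complex.re htrA'] at coreA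
  rw [show B'.det.re = B.det.re from congrArg Complex.re hdetB',
    show B'.trace.re = B.trace.re from congrArg Complex.re htrB'] at coreB
  have hsum : t * (∑ i, (A' i i).re / hC.1.eigenvalues i)
      + (1 - t) * (∑ i, (B' i i).re / hC.1.eigenvalues i) = n := by
    rw [Finset.mul_sum, Finset.mul_sum, ← Finset.sum_add_distrib]
    have h : ∀ i ∈ Finset.univ, t * ((A' i i).re / hC.1.eigenvalues i)
        + (1 - t) * ((B' i i).re / hC.1.eigenvalues i) = 1 := by
      intro i _
      rw [← mul_div_assoc, ← mul_div_assoc, ← add_div, hdiag i,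
        div_self (hd i).ne']
    rw [Finset.sum_congr rfl h]
    simp
  have hdiv : t * (A.trace.re / ∑ i, hC.1.eigenvalues i)
      + (1 - t) * (B.trace.re / ∑ i, hC.1.eigenvalues i) = 1 := by
    rw [← mul_div_assoc, ← mul_div_assoc, ← add_div,
      show t * A.trace.re + (1 - t) * B.trace.re = ∑ i, hC.1.eigenvalues i from
        hCtr.symm.trans (trace_re_eq_sum_eig hC.1),
      div_self hS.ne']
  have final := add_le_add (mul_le_mul_of_nonneg_left coreA ht0)
    (mul_le_mul_of_nonneg_left coreB ht1')
  refine final.trans_eq ?_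
  have hlogdetC : Real.log C.det.re = ∑ i, Real.log (hC.1.eigenvalues i) := by
    rw [det_re_eq hC.1]
    exact Real.log_prod (fun i _ => (hd i).ne')
  rw [hlogdetC, trace_re_eq_sum_eig hC.1]
  linear_combination hsum - hdiv
end

section
/- Strict concavity lemma (scalar eigenvalue form): Let n ≥ 2, ε > 0, Ψ > 0. There exist θ > 0 and N > 0, depending only on n, ε, Ψ, with the following property. Let λ_1, …, λ_n > 0 with W := ∑λ_i ≥ N and n∏λ_i = ψW for some 0 < ψ ≤ Ψ, and let μ_1, …, μ_n be reals with ε ≤ μ_i ≤ ε^{-1}. Set F^{ii} = 1/λ_i − 1/W. If moreover the subsolution condition ∏μ_i ≥ (ψ/n)∑μ_i holds, then ∑_i F^{ii}(μ_i − λ_i) ≥ θ(1 + ∑_i F^{ii}). -/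
open Finset

lemma aux_pow_le (k : ℕ) {x : ℝ} (hx : 0 ≤ x) (hx1 : x ≤ 1) :
    (1 + x) ^ k ≤ 1 + ((2:ℝ) ^ k - 1) * x := by
  induction k with
  | zero => simp
  | succ k ih =>
    have h2 : (1:ℝ) ≤ (2:ℝ) ^ k := one_le_pow₀ (by norm_num)
    have h3 : (1 + x) ^ k * (1+x) ≤ (1 + ((2:ℝ)^k - 1) * x) * (1 + x) :=
      mul_le_mul_of_nonneg_right ih (by linarith)
    have h4 : (1 + ((2:ℝ)^k - 1) * x) * (1 + x) ≤ 1 + ((2:ℝ)^(k+1) - 1) * x := by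
      nlinarith [mul_nonneg (mul_nonneg (by linarith : (0:ℝ) ≤ (2:ℝ)^k - 1) hx)
        (by linarith : (0:ℝ) ≤ 1 - x), pow_succ (2:ℝ) k]
    calc (1+x)^(k+1) = (1+x)^k * (1+x) := pow_succ _ _
      _ ≤ _ := h3
      _ ≤ _ := h4

lemma aux_amgm {ι : Type*} (s : Finset ι) (hs : s.Nonempty) (a : ι → ℝ)
    (ha : ∀ i ∈ s, 0 ≤ a i) :
    ∏ i ∈ s, a i ≤ ((∑ i ∈ s, a i) / s.card) ^ (s.card) := by
  have hc : (0:ℝ) < s.card := by exact_mod_cast Finset.card_pos.2 hs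
  have hw : ∑ i ∈ s, (1 / (s.card : ℝ)) = 1 := by
    rw [Finset.sum_const, nsmul_eq_mul]
    field_simp
  have h := Real.geom_mean_le_arith_mean_weighted s (fun _ => 1 / (s.card:ℝ)) a
    (fun i _ => by positivity) hw ha
  have hprod : ∏ i ∈ s, a i ^ (1 / (s.card:ℝ)) = (∏ i ∈ s, a i) ^ (1 / (s.card:ℝ)) :=
    Real.finset_prod_rpow s a ha _
  rw [hprod] at h
  have hsum : ∑ i ∈ s, (1 / (s.card:ℝ)) * a i = (∑ i ∈ s, a i) / s.card := by
    rw [← Finset.mul_sum]; ring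
  rw [hsum] at h
  have hP : (0:ℝ) ≤ ∏ i ∈ s, a i := Finset.prod_nonneg ha
  have := Real.rpow_le_rpow (Real.rpow_nonneg hP _) h (le_of_lt hc)
  rw [← Real.rpow_mul hP, one_div, inv_mul_cancel₀ (ne_of_gt hc), Real.rpow_one,
    Real.rpow_natCast] at this
  exact this

set_option maxHeartbeats 2000000 in
/-- Strict concavity lemma (Lemma 2.2, scalar eigenvalue form): there are
`θ, N > 0` depending only on `n, ε, Ψ` such that whenever `λᵢ > 0` with
`W = ∑ λᵢ ≥ N`, `n ∏ λᵢ = ψ W` with `0 < ψ ≤ Ψ`, `ε ≤ μᵢ ≤ ε⁻¹`, and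
`∏ μᵢ ≥ (ψ/n) ∑ μᵢ`, then `∑ Fⁱⁱ (μᵢ - λᵢ) ≥ θ (1 + ∑ Fⁱⁱ)` where
`Fⁱⁱ = 1/λᵢ - 1/W`. -/
theorem strict_concavity (n : ℕ) (hn : 2 ≤ n) (ε Ψ : ℝ) (hε : 0 < ε) (hΨ : 0 < Ψ) :
    ∃ θ > (0 : ℝ), ∃ N > (0 : ℝ),
      ∀ (lam μ : Fin n → ℝ) (ψ : ℝ),
        (∀ i, 0 < lam i) → (∀ i, ε ≤ μ i) → (∀ i, μ i ≤ ε⁻¹) →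
        0 < ψ → ψ ≤ Ψ →
        (n : ℝ) * ∏ i, lam i = ψ * ∑ i, lam i →
        N ≤ ∑ i, lam i →
        (ψ / n) * ∑ i, μ i ≤ ∏ i, μ i →
        θ * (1 + ∑ i, (1 / lam i - 1 / (∑ j, lam j)))
          ≤ ∑ i, (1 / lam i - 1 / (∑ j, lam j)) * (μ i - lam i) := by
  have hn2 : (2:ℝ) ≤ (n:ℝ) := by exact_mod_cast hn
  have hn1 : (0:ℝ) < (n:ℝ) - 1 := by linarith
  have hn0 : (0:ℝ) < (n:ℝ) := by linarith
  set η : ℝ := ((n:ℝ)-1)*ε^2/2 with hηdef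
  have hη : 0 < η := div_pos (mul_pos hn1 (pow_pos hε 2)) two_pos
  set c₀ : ℝ := η/(1+2*η) with hc₀def
  have hc₀ : 0 < c₀ := div_pos hη (by linarith)
  have hc₀1 : c₀ < 1 := by
    rw [hc₀def, div_lt_one (by linarith)]; linarith
  set K : ℝ := 2*((n:ℝ)+1)/ε with hKdef
  have hK : 0 < K := div_pos (by linarith) hε
  set δ : ℝ := ((n:ℝ)-1)*η/2^(n-1) with hδdef
  have hδ : 0 < δ := div_pos (mul_pos hn1 hη) (pow_pos two_pos _)
  set θ : ℝ := min (ε/2) (min (1/2) (δ/(2*(1+K)))) with hθdef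
  have hθ0 : 0 < θ := by
    apply lt_min (by linarith)
    exact lt_min (by norm_num) (div_pos hδ (by linarith))
  set N : ℝ := (n:ℝ)*Ψ*K^(n-2)/c₀ + 2*(n:ℝ)/(ε*δ) + (n:ℝ)*ε + (n:ℝ)/ε + 1 with hNdef
  have hT1 : 0 < (n:ℝ)*Ψ*K^(n-2)/c₀ := by positivity
  have hT2 : 0 < 2*(n:ℝ)/(ε*δ) := by positivity
  have hT3 : 0 < (n:ℝ)*ε := by positivity
  have hT4 : 0 < (n:ℝ)/ε := by positivity
  refine ⟨θ, hθ0, N, by positivity, ?_⟩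
  intro lam μ ψ hlam hμl hμu hψ0 hψΨ heq hNW hsub
  have i0 : Fin n := ⟨0, by omega⟩
  haveI : Nonempty (Fin n) := ⟨i0⟩
  have hε1 : ε ≤ 1 := by
    have h1 : ε ≤ ε⁻¹ := le_trans (hμl i0) (hμu i0)
    have h2 : ε * ε ≤ 1 := by
      calc ε * ε ≤ ε * ε⁻¹ := mul_le_mul_of_nonneg_left h1 hε.le
        _ = 1 := mul_inv_cancel₀ hε.ne'
    nlinarith [h2, sq_nonneg (ε - 1)]
  set W := ∑ i, lam i with hWdef
  have hW0 : 0 < W := Finset.sum_pos (fun i _ => hlam i) univ_nonempty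
  have hlamle : ∀ i, lam i ≤ W :=
    fun i => Finset.single_le_sum (fun j _ => (hlam j).le) (mem_univ i)
  have hF0 : ∀ i, 0 ≤ 1/lam i - 1/W := fun i => by
    rw [sub_nonneg]; exact one_div_le_one_div_of_le (hlam i) (hlamle i)
  -- identity : ∑ F i * lam i = n - 1
  have hsumlam : ∑ i, (1/lam i - 1/W) * lam i = (n:ℝ) - 1 := by
    have h1 : ∀ i ∈ (univ : Finset (Fin n)),
        (1/lam i - 1/W) * lam i = 1 - lam i * (1/W) := by
      intro i _
      rw [sub_mul, one_div, inv_mul_cancel₀ (ne_of_gt (hlam i)), one_div, ← div_eq_inv_mul,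
        div_eq_mul_one_div]
      rw [one_div]
    rw [Finset.sum_congr rfl h1, Finset.sum_sub_distrib, ← Finset.sum_mul]
    rw [Finset.sum_const, Finset.card_univ, Fintype.card_fin, nsmul_eq_mul, mul_one]
    rw [← hWdef, mul_one_div, div_self (ne_of_gt hW0)]
  set A := ∑ i, 1/lam i with hAdef
  have hA0 : 0 ≤ A := Finset.sum_nonneg (fun i _ => one_div_nonneg.2 (hlam i).le)
  have hFsum : ∑ i, (1/lam i - 1/W) = A - (n:ℝ)/W := by
    rw [Finset.sum_sub_distrib, ← hAdef, Finset.sum_const, Finset.card_univ,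
      Fintype.card_fin, nsmul_eq_mul, mul_one_div]
  have hFμ : ∑ i, (1/lam i - 1/W) * μ i = (∑ i, μ i / lam i) - (∑ i, μ i)/W := by
    have h1 : ∀ i ∈ (univ : Finset (Fin n)),
        (1/lam i - 1/W) * μ i = μ i / lam i - μ i * (1/W) := by
      intro i _
      have h1 := (hlam i).ne'
      have h2 := hW0.ne'
      field_simp
    rw [Finset.sum_congr rfl h1, Finset.sum_sub_distrib, ← Finset.sum_mul, mul_one_div]
  have hsplit : ∑ i, (1/lam i - 1/W) * (μ i - lam i)
      = (∑ i, (1/lam i - 1/W) * μ i) - ((n:ℝ) - 1) := by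
    simp only [mul_sub]
    rw [Finset.sum_sub_distrib, hsumlam]
  have hμsum_le : ∑ i, μ i ≤ (n:ℝ)/ε := by
    calc ∑ i, μ i ≤ ∑ _i : Fin n, ε⁻¹ := Finset.sum_le_sum (fun i _ => hμu i)
      _ = (n:ℝ)/ε := by
        rw [Finset.sum_const, Finset.card_univ, Fintype.card_fin, nsmul_eq_mul]
        rw [div_eq_mul_inv]
  have hμsum_pos : 0 < ∑ i, μ i :=
    Finset.sum_pos (fun i _ => lt_of_lt_of_le hε (hμl i)) univ_nonempty
  rw [hsplit]
  rcases le_or_gt K A with hA | hA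
  · -- Case A : A large
    have hθε : θ ≤ ε/2 := min_le_left _ _
    have hθh : θ ≤ 1/2 := le_trans (min_le_right _ _) (min_le_left _ _)
    have hFnn : 0 ≤ ∑ i, (1/lam i - 1/W) := Finset.sum_nonneg (fun i _ => hF0 i)
    have h1 : ε * ∑ i, (1/lam i - 1/W) ≤ ∑ i, (1/lam i - 1/W) * μ i := by
      rw [Finset.mul_sum]
      refine Finset.sum_le_sum (fun i _ => ?_)
      rw [mul_comm]
      exact mul_le_mul_of_nonneg_left (hμl i) (hF0 i)
    have h2 : θ * ∑ i, (1/lam i - 1/W) ≤ (ε/2) * ∑ i, (1/lam i - 1/W) :=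
      mul_le_mul_of_nonneg_right hθε hFnn
    have h3 : (ε/2) * K ≤ (ε/2) * ((∑ i, (1/lam i - 1/W)) + (n:ℝ)/W) := by
      refine mul_le_mul_of_nonneg_left ?_ (by linarith)
      rw [hFsum]; linarith
    have h4 : (ε/2) * K = (n:ℝ) + 1 := by
      rw [hKdef]; field_simp
    have hNn : (n:ℝ)*ε ≤ W := by
      have h0 : (n:ℝ)*ε ≤ N := by rw [hNdef]; linarith only [hT1, hT2, hT4]
      linarith only [h0, hNW]
    have h5 : ε * ((n:ℝ)/W) ≤ 1 := by
      calc ε * ((n:ℝ)/W) = (ε*(n:ℝ))/W := by ring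
        _ ≤ 1 := (div_le_one hW0).2 (by linarith [hNn])
    have e1 : θ * (1 + ∑ i, (1/lam i - 1/W)) = θ + θ * ∑ i, (1/lam i - 1/W) := by ring
    have e2 : ε * ∑ i, (1/lam i - 1/W) = 2*((ε/2) * ∑ i, (1/lam i - 1/W)) := by ring
    have e3 : (ε/2) * ((∑ i, (1/lam i - 1/W)) + (n:ℝ)/W)
        = (ε/2) * ∑ i, (1/lam i - 1/W) + (ε * ((n:ℝ)/W))/2 := by ring
    linarith only [h1, h2, h3, h4, h5, e1, e2, e3, hθh]
  · -- Case B : A < K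
    have hFnn : 0 ≤ ∑ i, (1/lam i - 1/W) := Finset.sum_nonneg (fun i _ => hF0 i)
    have hlaminvK : ∀ i, 1/lam i < K := fun i =>
      lt_of_le_of_lt (Finset.single_le_sum (f := fun j => 1/lam j)
        (fun j _ => one_div_nonneg.2 (hlam j).le) (mem_univ i)) hA
    have hlamK : ∀ i, 1/K ≤ lam i := by
      intro i
      have h1 := hlaminvK i
      have h2 := hlam i
      rw [div_lt_iff₀ h2] at h1
      rw [div_le_iff₀ hK, mul_comm]
      exact h1.le
    obtain ⟨m, -, hmax⟩ := Finset.exists_max_image (univ : Finset (Fin n)) lam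
      ⟨i0, mem_univ i0⟩
    have hWnm : W ≤ (n:ℝ) * lam m := by
      have h1 : W ≤ ∑ _i : Fin n, lam m := Finset.sum_le_sum (fun i _ => hmax i (mem_univ i))
      rwa [Finset.sum_const, Finset.card_univ, Fintype.card_fin, nsmul_eq_mul] at h1
    have hμm0 : 0 < μ m := lt_of_lt_of_le hε (hμl m)
    have hlamm0 : 0 < lam m := hlam m
    have hscard : (univ.erase m).card = n - 1 := by
      rw [Finset.card_erase_of_mem (mem_univ m), Finset.card_univ, Fintype.card_fin]
    have hcast : ((n - 1 : ℕ) : ℝ) = (n:ℝ) - 1 := by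
      rw [Nat.cast_sub (by omega : 1 ≤ n), Nat.cast_one]
    have hsne : (univ.erase m).Nonempty := by
      rw [← Finset.card_pos, hscard]; omega
    have hprodlam : lam m * ∏ i ∈ univ.erase m, lam i = ∏ i, lam i :=
      Finset.mul_prod_erase univ lam (mem_univ m)
    have hprodμ : μ m * ∏ i ∈ univ.erase m, μ i = ∏ i, μ i :=
      Finset.mul_prod_erase univ μ (mem_univ m)
    have hPlam0 : 0 < ∏ i ∈ univ.erase m, lam i :=
      Finset.prod_pos (fun i _ => hlam i)
    have hμsum_gem : (1+2*η) * μ m ≤ ∑ i, μ i := by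
      have hsumer : μ m + ∑ i ∈ univ.erase m, μ i = ∑ i, μ i :=
        Finset.add_sum_erase univ μ (mem_univ m)
      have hterm : ∀ i ∈ univ.erase m, ε^2 * μ m ≤ μ i := by
        intro i _
        have h1 : ε * μ m ≤ 1 := by
          calc ε * μ m ≤ ε * ε⁻¹ := mul_le_mul_of_nonneg_left (hμu m) hε.le
            _ = 1 := mul_inv_cancel₀ hε.ne'
        have h2 := mul_le_mul_of_nonneg_left h1 hε.le
        have h3 := hμl i
        nlinarith only [h2, h3]
      have h2 : ∑ _i ∈ univ.erase m, (ε^2 * μ m) ≤ ∑ i ∈ univ.erase m, μ i :=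
        Finset.sum_le_sum hterm
      rw [Finset.sum_const, hscard, nsmul_eq_mul, hcast] at h2
      have e1 : (1+2*η)*μ m = μ m + ((n:ℝ)-1) * (ε^2 * μ m) := by rw [hηdef]; ring
      linarith only [hsumer, h2, e1]
    rcases le_or_gt ((1-c₀)*W) (lam m) with hB1 | hB2
    · -- B1 : lam m close to W
      have hc₀id : (1+2*η)*(1-c₀) = 1+η := by
        rw [hc₀def]; field_simp; ring
      have ha1 : (1+2*η)*μ m * ((1-c₀)*W) ≤ (∑ i, μ i) * lam m :=
        mul_le_mul hμsum_gem hB1 (mul_nonneg (by linarith) hW0.le) hμsum_pos.le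
      have h1 : (1+η)*ψ*W*μ m ≤ ψ*((∑ i, μ i)*lam m) := by
        calc (1+η)*ψ*W*μ m = ψ * ((1+2*η)*μ m * ((1-c₀)*W)) := by rw [← hc₀id]; ring
          _ ≤ ψ * ((∑ i, μ i)*lam m) := mul_le_mul_of_nonneg_left ha1 hψ0.le
      have h2 : ψ * (∑ i, μ i) ≤ (n:ℝ) * ∏ i, μ i := by
        have h := hsub
        rw [div_mul_eq_mul_div, div_le_iff₀ hn0] at h
        linarith only [h]
      have hkey : (1+η) * ∏ i ∈ univ.erase m, lam i ≤ ∏ i ∈ univ.erase m, μ i := by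
        have hpos : 0 < (n:ℝ)*μ m*lam m := by positivity
        have h3 : ((1+η) * ∏ i ∈ univ.erase m, lam i) * ((n:ℝ)*μ m*lam m)
            ≤ (∏ i ∈ univ.erase m, μ i) * ((n:ℝ)*μ m*lam m) := by
          calc ((1+η) * ∏ i ∈ univ.erase m, lam i) * ((n:ℝ)*μ m*lam m)
              = ((n:ℝ) * (lam m * ∏ i ∈ univ.erase m, lam i)) * ((1+η)*μ m) := by ring
            _ = ((n:ℝ) * ∏ i, lam i) * ((1+η)*μ m) := by rw [hprodlam]
            _ = (1+η)*ψ*W*μ m := by rw [heq]; ring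
            _ ≤ ψ*((∑ i, μ i)*lam m) := h1
            _ = (ψ*(∑ i, μ i)) * lam m := by ring
            _ ≤ ((n:ℝ) * ∏ i, μ i) * lam m := mul_le_mul_of_nonneg_right h2 hlamm0.le
            _ = ((n:ℝ) * (μ m * ∏ i ∈ univ.erase m, μ i)) * lam m := by rw [hprodμ]
            _ = (∏ i ∈ univ.erase m, μ i) * ((n:ℝ)*μ m*lam m) := by ring
        exact le_of_mul_le_mul_right h3 hpos
      have hratio : 1 + η ≤ ∏ i ∈ univ.erase m, (μ i / lam i) := by
        rw [Finset.prod_div_distrib, le_div_iff₀ hPlam0]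
        linarith only [hkey]
      have hsums : ((n:ℝ) - 1) + δ ≤ ∑ i ∈ univ.erase m, μ i / lam i := by
        by_contra hcon
        push_neg at hcon
        have hanneg : ∀ i ∈ univ.erase m, 0 ≤ μ i / lam i :=
          fun i _ => div_nonneg (le_trans hε.le (hμl i)) (hlam i).le
        have hamgm := aux_amgm _ hsne (fun i => μ i / lam i) hanneg
        rw [hscard, hcast] at hamgm
        have hsnn : 0 ≤ ∑ i ∈ univ.erase m, μ i / lam i := Finset.sum_nonneg hanneg
        have hlt : (∑ i ∈ univ.erase m, μ i / lam i) / ((n:ℝ)-1)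
            < 1 + δ/((n:ℝ)-1) := by
          rw [div_lt_iff₀ hn1]
          have e : (1 + δ/((n:ℝ)-1))*((n:ℝ)-1) = ((n:ℝ)-1) + δ := by field_simp
          linarith only [hcon, e]
        have h6 : ((∑ i ∈ univ.erase m, μ i / lam i) / ((n:ℝ)-1))^(n-1)
            < (1 + δ/((n:ℝ)-1))^(n-1) :=
          pow_lt_pow_left₀ hlt (by positivity) (by omega)
        have hx : δ/((n:ℝ)-1) = η/2^(n-1) := by
          rw [hδdef]; field_simp
        have hx0 : 0 ≤ δ/((n:ℝ)-1) := by rw [hx]; positivity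
        have hx1 : δ/((n:ℝ)-1) ≤ 1 := by
          rw [hx, div_le_one (by positivity)]
          have hε2 : ε^2 ≤ 1 := pow_le_one₀ hε.le hε1
          have hεη : η ≤ ((n:ℝ)-1)/2 := by
            rw [hηdef]
            have h := mul_le_mul_of_nonneg_left hε2 hn1.le
            linarith only [h]
          have hp : ((n:ℝ)-1) ≤ 2^(n-1) := by
            calc ((n:ℝ)-1) = ((n-1 : ℕ) : ℝ) := hcast.symm
              _ ≤ 2^(n-1) := by exact_mod_cast (Nat.lt_two_pow_self (n := n-1)).le
          linarith only [hεη, hp, hn1]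
        have h7 := aux_pow_le (n-1) hx0 hx1
        have hη2 : (0:ℝ) < η/2^(n-1) := by positivity
        have e2 : ((2:ℝ)^(n-1) - 1) * (δ/((n:ℝ)-1)) = η - η/2^(n-1) := by
          rw [hx]; field_simp
        linarith only [hratio, hamgm, h6, h7, e2, hη2]
      have hsumall : ((n:ℝ)-1) + δ ≤ ∑ i, μ i / lam i := by
        refine le_trans hsums (Finset.sum_le_sum_of_subset_of_nonneg
          (Finset.subset_univ _) ?_)
        intro i _ _
        exact div_nonneg (le_trans hε.le (hμl i)) (hlam i).le
      have hW2 : 2*(n:ℝ)/(ε*δ) ≤ W := by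
        have h9 : 2*(n:ℝ)/(ε*δ) ≤ N := by rw [hNdef]; linarith only [hT1, hT3, hT4]
        exact le_trans h9 hNW
      have hμW : (∑ i, μ i)/W ≤ δ/2 := by
        rw [div_le_iff₀ hW0]
        have h9 : (δ/2) * (2*(n:ℝ)/(ε*δ)) ≤ (δ/2)*W :=
          mul_le_mul_of_nonneg_left hW2 (by linarith)
        have e9 : (δ/2) * (2*(n:ℝ)/(ε*δ)) = (n:ℝ)/ε := by field_simp
        linarith only [h9, e9, hμsum_le]
      have hθδ : θ*(1 + ∑ i, (1/lam i - 1/W)) ≤ δ/2 := by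
        have hFK : ∑ i, (1/lam i - 1/W) ≤ K := by
          rw [hFsum]
          have h10 : 0 ≤ (n:ℝ)/W := by positivity
          linarith only [hA, h10]
        have hθ3 : θ ≤ δ/(2*(1+K)) := le_trans (min_le_right _ _) (min_le_right _ _)
        have h10 : θ*(1 + ∑ i, (1/lam i - 1/W)) ≤ (δ/(2*(1+K)))*(1+K) :=
          mul_le_mul hθ3 (by linarith) (by linarith) (by positivity)
        have e10 : (δ/(2*(1+K)))*(1+K) = δ/2 := by
          field_simp
        linarith only [h10, e10]
      rw [hFμ]
      linarith only [hsumall, hμW, hθδ]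
    · -- B2 : impossible for W large
      exfalso
      have hsum_er : lam m + ∑ i ∈ univ.erase m, lam i = W :=
        Finset.add_sum_erase univ lam (mem_univ m)
      obtain ⟨j, hjs, hjmax⟩ := Finset.exists_max_image (univ.erase m) lam hsne
      have hsumj : ∑ i ∈ univ.erase m, lam i ≤ ((n:ℝ)-1) * lam j := by
        have h1 : ∑ i ∈ univ.erase m, lam i ≤ ∑ _i ∈ univ.erase m, lam j :=
          Finset.sum_le_sum (fun i hi => hjmax i hi)
        rwa [Finset.sum_const, hscard, nsmul_eq_mul, hcast] at h1
      have hlamj : c₀*W/(n:ℝ) ≤ lam j := by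
        have h2 : c₀*W < ∑ i ∈ univ.erase m, lam i := by
          linarith only [hsum_er, hB2]
        have h3 : c₀*W < ((n:ℝ)-1)*lam j := lt_of_lt_of_le h2 hsumj
        have hj0 : 0 < lam j := hlam j
        rw [div_le_iff₀ hn0]
        linarith only [h3, hj0]
      have htcard : ((univ.erase m).erase j).card = n - 2 := by
        rw [Finset.card_erase_of_mem hjs, hscard]
        omega
      have hPt0 : 0 < ∏ i ∈ (univ.erase m).erase j, lam i :=
        Finset.prod_pos (fun i _ => hlam i)
      have hprod_t : (1/K)^(n-2) ≤ ∏ i ∈ (univ.erase m).erase j, lam i := by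
        calc (1/K)^(n-2) = ∏ _i ∈ (univ.erase m).erase j, (1/K) := by
              rw [Finset.prod_const, htcard]
          _ ≤ ∏ i ∈ (univ.erase m).erase j, lam i :=
              Finset.prod_le_prod (fun i _ => by positivity) (fun i _ => hlamK i)
      have hfac : ∏ i, lam i = lam m * (lam j * ∏ i ∈ (univ.erase m).erase j, lam i) := by
        rw [← hprodlam, Finset.mul_prod_erase _ lam hjs]
      have hWn : W/(n:ℝ) ≤ lam m := by
        rw [div_le_iff₀ hn0]; linarith only [hWnm]
      have hc₀Wn : 0 ≤ c₀*W/(n:ℝ) := div_nonneg (mul_nonneg hc₀.le hW0.le) hn0.le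
      have hstep1 : (W/(n:ℝ))*((c₀*W/(n:ℝ))*(1/K)^(n-2)) ≤ ∏ i, lam i := by
        rw [hfac]
        refine mul_le_mul hWn ?_ (mul_nonneg hc₀Wn (by positivity)) hlamm0.le
        exact mul_le_mul hlamj hprod_t (by positivity) (hlam j).le
      have hstep2 : (n:ℝ) * ((W/(n:ℝ))*((c₀*W/(n:ℝ))*(1/K)^(n-2))) ≤ Ψ * W := by
        calc (n:ℝ) * ((W/(n:ℝ))*((c₀*W/(n:ℝ))*(1/K)^(n-2)))
            ≤ (n:ℝ) * ∏ i, lam i := mul_le_mul_of_nonneg_left hstep1 hn0.le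
          _ = ψ * W := heq
          _ ≤ Ψ * W := mul_le_mul_of_nonneg_right hψΨ hW0.le
      have hKp : (0:ℝ) < K^(n-2) := pow_pos hK _
      have hinv : (1/K)^(n-2) = 1/K^(n-2) := by rw [div_pow, one_pow]
      have hstep3 : (c₀ * W / ((n:ℝ)*K^(n-2))) ≤ Ψ := by
        have e : (n:ℝ)*((W/(n:ℝ))*((c₀*W/(n:ℝ))*(1/K)^(n-2)))
            = (c₀ * W / ((n:ℝ)*K^(n-2))) * W := by
          rw [hinv]; field_simp
        rw [e] at hstep2
        exact le_of_mul_le_mul_right hstep2 hW0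
      have hfinal : W ≤ (n:ℝ)*Ψ*K^(n-2)/c₀ := by
        rw [le_div_iff₀ hc₀]
        rw [div_le_iff₀ (by positivity : (0:ℝ) < (n:ℝ)*K^(n-2))] at hstep3
        linarith only [hstep3]
      have hNle : (n:ℝ)*Ψ*K^(n-2)/c₀ + 1 ≤ N := by rw [hNdef]; linarith only [hT2, hT3, hT4]
      have hcontr : (n:ℝ)*Ψ*K^(n-2)/c₀ + 1 ≤ (n:ℝ)*Ψ*K^(n-2)/c₀ :=
        le_trans (le_trans hNle hNW) hfinal
      linarith only [hcontr]
end
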